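/- Let M, D, K be n×n complex matrices and X₀ an n×q matrix, and s ∈ ℂ with s²M + sD + K invertible. With E = [[I,0],[0,M]], A = [[0,I],[-K,-D]], and 𝓑 = [X₀; 0], the upper n×q block of (A - sE)⁻¹𝓑 equals -(s²M + sD + K)⁻¹(sM + D)X₀. -/

import Mathlib

open Matrix

theorem companion_position_initial_condition_block {n q : ℕ}
    (M D K : Matrix (Fin n) (Fin n) ℂ) (X₀ : Matrix (Fin n) (Fin q) ℂ) (s : ℂ)
    (hs : IsUnit (s ^ 2 • M + s • D + K)) :
    ((((fromBlocks 0 1 (-K) (-D) : Matrix (Fin n ⊕ Fin n) (Fin n ⊕ Fin n) ℂ)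
          - s • fromBlocks 1 0 0 M)⁻¹) *
        fromRows X₀ (0 : Matrix (Fin n) (Fin q) ℂ)).submatrix Sum.inl id =
      -((s ^ 2 • M + s • D + K)⁻¹ * (s • M + D) * X₀) := by
  set P : Matrix (Fin n) (Fin n) ℂ := s ^ 2 • M + s • D + K with hP
  have hPinv : P⁻¹ * P = 1 :=
    Matrix.nonsing_inv_mul _ ((Matrix.isUnit_iff_isUnit_det _).mp hs)
  set N : Matrix (Fin n ⊕ Fin n) (Fin n ⊕ Fin n) ℂ :=
    fromBlocks (-(P⁻¹ * (D + s • M))) (-P⁻¹) (P⁻¹ * K) (-(s • P⁻¹)) with hN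
  have hsum1 : s • (D + s • M) + K = P := by
    rw [hP, smul_add, smul_smul, ← sq]; abel
  have hsum2 : K + s • (D + s • M) = P := by rw [add_comm, hsum1]
  have hpencil : ((fromBlocks 0 1 (-K) (-D) : Matrix (Fin n ⊕ Fin n) (Fin n ⊕ Fin n) ℂ)
      - s • fromBlocks 1 0 0 M)
      = fromBlocks (-(s • (1 : Matrix (Fin n) (Fin n) ℂ))) 1 (-K) (-(D + s • M)) := by
    rw [fromBlocks_smul, sub_eq_add_neg, fromBlocks_neg, fromBlocks_add]
    simp; abel
  have hleft : N * ((fromBlocks 0 1 (-K) (-D) : Matrix (Fin n ⊕ Fin n) (Fin n ⊕ Fin n) ℂ)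
      - s • fromBlocks 1 0 0 M) = 1 := by
    rw [hpencil, hN, fromBlocks_multiply]
    have h11 : -(P⁻¹ * (D + s • M)) * -(s • (1 : Matrix (Fin n) (Fin n) ℂ)) + -P⁻¹ * -K = 1 := by
      rw [Matrix.neg_mul, Matrix.mul_neg, neg_neg, Matrix.neg_mul, Matrix.mul_neg, neg_neg,
        Matrix.mul_smul, Matrix.mul_one, ← Matrix.mul_smul, ← Matrix.mul_add, hsum1, hPinv]
    have h12 : -(P⁻¹ * (D + s • M)) * 1 + -P⁻¹ * -(D + s • M) = 0 := by
      rw [Matrix.mul_one, Matrix.neg_mul, Matrix.mul_neg, neg_neg, neg_add_cancel]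
    have h21 : P⁻¹ * K * -(s • (1 : Matrix (Fin n) (Fin n) ℂ)) + -(s • P⁻¹) * -K = 0 := by
      rw [Matrix.mul_neg, Matrix.mul_smul, Matrix.mul_one, Matrix.neg_mul, Matrix.mul_neg,
        neg_neg, Matrix.smul_mul, neg_add_cancel]
    have h22 : P⁻¹ * K * 1 + -(s • P⁻¹) * -(D + s • M) = 1 := by
      rw [Matrix.mul_one, Matrix.neg_mul, Matrix.mul_neg, neg_neg, Matrix.smul_mul,
        ← Matrix.mul_smul, ← Matrix.mul_add, hsum2, hPinv]
    rw [h11, h12, h21, h22, ← fromBlocks_one]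
  rw [Matrix.inv_eq_left_inv hleft, hN, fromBlocks_mul_fromRows]
  ext i j
  simp [fromRows, Matrix.neg_mul, Matrix.mul_assoc, add_comm D (s • M)]
  rfl
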